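/- Let H be a Hilbert space and (B_1^{(k)},...,B_n^{(k)}) for each k an orthonormal system obtained by Gram–Schmidt from unit vectors (E_{a_1^{(k)}},...,E_{a_n^{(k)}}). Suppose f ∈ H, an index l₀ < n, and: (a) B_j^{(k)} → B_j in norm for j ≤ l₀; (b) ⟨f, E_{a_t^{(k)}}⟩ → 0 and ⟨E_{a_t^{(k)}}, B_j⟩ → 0 for all t > l₀ and j ≤ l₀, as k → ∞; (c) the Gram–Schmidt normalization denominators ‖E_{a_t^{(k)}} − Σ_{j<t} ⟨E_{a_t^{(k)}}, B_j^{(k)}⟩ B_j^{(k)}‖ are bounded below by a positive constant, and ⟨E_{a_t^{(k)}}, E_{a_s^{(k)}}⟩ → 0 for l₀ < s < t. Then ⟨f, B_t^{(k)}⟩ → 0 as k → ∞ for every t with l₀ < t ≤ n. -/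

import Mathlib

open Filter

noncomputable section

/-- Gram–Schmidt orthogonalization (non-normalized) of a tuple `v : Fin n → H`. -/
def GS {H : Type*} [NormedAddCommGroup H] [InnerProductSpace ℂ H]
    (n : ℕ) [NeZero n] (v : Fin n → H) : Fin n → H :=
  @InnerProductSpace.gramSchmidt ℂ H _ _ _ (Fin n) _ _ (inferInstance : WellFoundedLT (Fin n)) v

/-- Gram–Schmidt orthonormalization of a tuple `v : Fin n → H`. -/
def GSNormed {H : Type*} [NormedAddCommGroup H] [InnerProductSpace ℂ H]
    (n : ℕ) [NeZero n] (v : Fin n → H) : Fin n → H :=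
  @InnerProductSpace.gramSchmidtNormed ℂ H _ _ _ (Fin n) _ _ (inferInstance : WellFoundedLT (Fin n)) v

/-- Product of a sequence tending to zero with a bounded sequence tends to zero. -/
lemma tendsto_zero_mul_bounded {a b : ℕ → ℂ} (ha : Tendsto a atTop (nhds 0))
    {M : ℝ} (hb : ∀ k, ‖b k‖ ≤ M) :
    Tendsto (fun k => a k * b k) atTop (nhds 0) := by
  have hg : Tendsto (fun k => ‖a k‖ * M) atTop (nhds 0) := by
    simpa using (ha.norm.mul_const M)
  apply squeeze_zero_norm (fun k => ?_) hg
  calc ‖a k * b k‖ = ‖a k‖ * ‖b k‖ := norm_mul _ _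
    _ ≤ ‖a k‖ * M := mul_le_mul_of_nonneg_left (hb k) (norm_nonneg _)

/-- Conjugation preserves tending to zero. -/
lemma tendsto_zero_conj {a : ℕ → ℂ} (ha : Tendsto a atTop (nhds 0)) :
    Tendsto (fun k => (starRingEnd ℂ) (a k)) atTop (nhds 0) := by
  have := (Complex.continuous_conj.tendsto (0 : ℂ)).comp ha
  simpa [Function.comp_def] using this

/-- Key induction lemma: vanishing of the boundary-escaping Gram–Schmidt coefficients.
For each `k`, `B^{(k)} = GSNormed (v k)` is obtained by Gram–Schmidt from unit vectors
`v k = (E_{a₁^{(k)}}, ..., E_{aₙ^{(k)}})`. Under hypotheses (a)–(c),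
`⟨f, B_t^{(k)}⟩ → 0` as `k → ∞` for every `t` with `l₀ < t ≤ n` (0-indexed:
`l₀ ≤ t < n`). -/
theorem boundary_coefficients_vanish {H : Type*} [NormedAddCommGroup H]
    [InnerProductSpace ℂ H] (n : ℕ) [NeZero n] (l₀ : ℕ) (hl₀ : l₀ < n)
    (v : ℕ → Fin n → H) (hunit : ∀ k t, ‖v k t‖ = 1) (f : H) (Blim : Fin n → H)
    -- (a) the interior Gram–Schmidt vectors converge
    (ha : ∀ j : Fin n, (j : ℕ) < l₀ →
      Tendsto (fun k => GSNormed n (v k) j) atTop (nhds (Blim j)))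
    -- (b) boundary-escaping dictionary vectors decouple from `f` and from the limits
    (hb1 : ∀ t : Fin n, l₀ ≤ (t : ℕ) →
      Tendsto (fun k => (inner ℂ f (v k t) : ℂ)) atTop (nhds 0))
    (hb2 : ∀ t : Fin n, l₀ ≤ (t : ℕ) → ∀ j : Fin n, (j : ℕ) < l₀ →
      Tendsto (fun k => (inner ℂ (v k t) (Blim j) : ℂ)) atTop (nhds 0))
    -- (c) the Gram–Schmidt normalization denominators are bounded below, and
    -- distinct boundary-escaping vectors decouple from each other
    (hc1 : ∃ ε > (0 : ℝ), ∀ k, ∀ t : Fin n, ε ≤ ‖GS n (v k) t‖)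
    (hc2 : ∀ s t : Fin n, l₀ ≤ (s : ℕ) → s < t →
      Tendsto (fun k => (inner ℂ (v k t) (v k s) : ℂ)) atTop (nhds 0)) :
    ∀ t : Fin n, l₀ ≤ (t : ℕ) →
      Tendsto (fun k => (inner ℂ f (GSNormed n (v k) t) : ℂ)) atTop (nhds 0) := by
  obtain ⟨ε, hε, hεle⟩ := hc1
  have hGSne : ∀ k (t : Fin n), GS n (v k) t ≠ 0 := by
    intro k t h
    have := hεle k t
    rw [h, norm_zero] at this
    linarith
  have hNdef : ∀ k (t : Fin n),
      GSNormed n (v k) t = ((‖GS n (v k) t‖ : ℝ) : ℂ)⁻¹ • GS n (v k) t := fun _ _ => rfl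
  have hBnorm : ∀ k (t : Fin n), ‖GSNormed n (v k) t‖ = 1 := by
    intro k t
    rw [hNdef]
    exact norm_smul_inv_norm (hGSne k t)
  -- the Gram–Schmidt recursion in terms of the normalized vectors
  have hGSdef : ∀ k (t : Fin n), GS n (v k) t = v k t -
      ∑ j ∈ Finset.Iio t,
        ((inner ℂ (GSNormed n (v k) j) (v k t) : ℂ)) • GSNormed n (v k) j := by
    intro k t
    have h0 := @InnerProductSpace.gramSchmidt_def ℂ H _ _ _ (Fin n) _ _
      (inferInstance : WellFoundedLT (Fin n)) (v k) t
    rw [show GS n (v k) t = _ from h0]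
    congr 1
    refine Finset.sum_congr rfl fun j hj => ?_
    rw [Submodule.starProjection_singleton]
    rw [show (@InnerProductSpace.gramSchmidt ℂ H _ _ _ (Fin n) _ _
      (inferInstance : WellFoundedLT (Fin n)) (v k) j) = GS n (v k) j from rfl]
    rw [hNdef, inner_smul_left, smul_smul, map_inv₀, Complex.conj_ofReal]
    congr 1
    have hne : ((‖GS n (v k) j‖ : ℝ) : ℂ) ≠ 0 := by
      simpa using norm_ne_zero_iff.mpr (hGSne k j)
    field_simp
    push_cast
    rfl
  -- key claim, proved by strong induction on `t`
  have key : ∀ m : ℕ, ∀ t : Fin n, (t : ℕ) = m → l₀ ≤ (t : ℕ) →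
      ∀ g : ℕ → H, ∀ C : ℝ, (∀ k, ‖g k‖ ≤ C) →
      (∀ s : Fin n, l₀ ≤ (s : ℕ) → s ≤ t →
        Tendsto (fun k => (inner ℂ (g k) (v k s) : ℂ)) atTop (nhds 0)) →
      Tendsto (fun k => (inner ℂ (g k) (GSNormed n (v k) t) : ℂ)) atTop (nhds 0) := by
    intro m
    induction m using Nat.strong_induction_on with
    | _ m IH =>
    intro t htm htl g C hgC hgv
    -- Step 1 : the inner products against the unnormalized vectors vanish
    have hsum : Tendsto (fun k => (inner ℂ (g k) (GS n (v k) t) : ℂ)) atTop (nhds 0) := by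
      have hrw : ∀ k, (inner ℂ (g k) (GS n (v k) t) : ℂ) =
          inner ℂ (g k) (v k t) - ∑ j ∈ Finset.Iio t,
            (inner ℂ (GSNormed n (v k) j) (v k t) : ℂ) * inner ℂ (g k) (GSNormed n (v k) j) := by
        intro k
        rw [hGSdef k t, inner_sub_right, inner_sum]
        simp_rw [inner_smul_right]
      simp only [hrw]
      have h1 := hgv t htl le_rfl
      have h2 : Tendsto (fun k => ∑ j ∈ Finset.Iio t,
          (inner ℂ (GSNormed n (v k) j) (v k t) : ℂ) * inner ℂ (g k) (GSNormed n (v k) j))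
          atTop (nhds 0) := by
        have hterm : ∀ j ∈ Finset.Iio t, Tendsto
            (fun k => (inner ℂ (GSNormed n (v k) j) (v k t) : ℂ) *
              inner ℂ (g k) (GSNormed n (v k) j)) atTop (nhds 0) := by
          intro j hj
          have hjt : j < t := Finset.mem_Iio.mp hj
          have hbound : ∀ k, ‖(inner ℂ (g k) (GSNormed n (v k) j) : ℂ)‖ ≤ C := by
            intro k
            calc ‖(inner ℂ (g k) (GSNormed n (v k) j) : ℂ)‖
                ≤ ‖g k‖ * ‖GSNormed n (v k) j‖ := norm_inner_le_norm _ _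
              _ = ‖g k‖ := by rw [hBnorm k j, mul_one]
              _ ≤ C := hgC k
          by_cases hjl : (j : ℕ) < l₀
          · -- interior index: the normalized vectors converge and decouple from `v k t`
            refine tendsto_zero_mul_bounded ?_ hbound
            have hd : Tendsto (fun k => GSNormed n (v k) j - Blim j) atTop (nhds 0) := by
              simpa using (ha j hjl).sub (tendsto_const_nhds (x := Blim j))
            have hmain : Tendsto (fun k =>
                (inner ℂ (v k t) (GSNormed n (v k) j) : ℂ)) atTop (nhds 0) := by
              have heq : ∀ k, (inner ℂ (v k t) (GSNormed n (v k) j) : ℂ) =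
                  inner ℂ (v k t) (GSNormed n (v k) j - Blim j) + inner ℂ (v k t) (Blim j) := by
                intro k
                rw [inner_sub_right]
                ring
              simp only [heq]
              have hA : Tendsto (fun k =>
                  (inner ℂ (v k t) (GSNormed n (v k) j - Blim j) : ℂ)) atTop (nhds 0) := by
                apply squeeze_zero_norm (a := fun k => ‖GSNormed n (v k) j - Blim j‖)
                · intro k
                  calc ‖(inner ℂ (v k t) (GSNormed n (v k) j - Blim j) : ℂ)‖
                      ≤ ‖v k t‖ * ‖GSNormed n (v k) j - Blim j‖ := norm_inner_le_norm _ _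
                    _ = ‖GSNormed n (v k) j - Blim j‖ := by rw [hunit k t, one_mul]
                · simpa using hd.norm
              simpa using hA.add (hb2 t htl j hjl)
            have := tendsto_zero_conj hmain
            simpa only [inner_conj_symm] using this
          · -- boundary index: apply the induction hypothesis with `g k = v k t`
            push_neg at hjl
            refine tendsto_zero_mul_bounded ?_ hbound
            have hj' : (j : ℕ) < m := htm ▸ hjt
            have hIH := IH (j : ℕ) hj' j rfl hjl (fun k => v k t) 1
              (fun k => le_of_eq (hunit k t))
              (fun s hs hsj => hc2 s t hs (lt_of_le_of_lt hsj hjt))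
            have := tendsto_zero_conj hIH
            simpa only [inner_conj_symm] using this
        have := tendsto_finset_sum (Finset.Iio t) hterm
        simpa using this
      simpa using h1.sub h2
    -- Step 2 : divide by the norm, which is bounded below by `ε`
    have hrw2 : ∀ k, (inner ℂ (g k) (GSNormed n (v k) t) : ℂ) =
        ((‖GS n (v k) t‖ : ℝ) : ℂ)⁻¹ * inner ℂ (g k) (GS n (v k) t) := by
      intro k
      rw [hNdef, inner_smul_right]
    apply squeeze_zero_norm (a := fun k => ε⁻¹ * ‖(inner ℂ (g k) (GS n (v k) t) : ℂ)‖)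
    · intro k
      rw [hrw2 k, norm_mul]
      have h1 : ‖(((‖GS n (v k) t‖ : ℝ)) : ℂ)⁻¹‖ = ‖GS n (v k) t‖⁻¹ := by
        rw [norm_inv, Complex.norm_real, Real.norm_eq_abs, abs_of_nonneg (norm_nonneg _)]
      rw [h1]
      have h2 : ‖GS n (v k) t‖⁻¹ ≤ ε⁻¹ := inv_anti₀ hε (hεle k t)
      exact mul_le_mul_of_nonneg_right h2 (norm_nonneg _)
    · simpa using hsum.norm.const_mul ε⁻¹
  intro t ht
  exact key (t : ℕ) t rfl ht (fun _ => f) ‖f‖ (fun _ => le_rfl)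
    (fun s hs _ => hb1 s hs)
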